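/- Given a finite signature, the proof system L_C (all propositional tautologies, modus ponens, and the axiom schemes A1–A7, A[], A¬, A∧, A[][]) is sound and strongly complete for the language L_C with respect to recursive causal models: for every set Γ ∪ {φ} of L_C formulas, Γ proves φ in L_C if and only if every recursive causal model satisfying all formulas of Γ satisfies φ. -/

import Mathlib

open Classical

/-- A finite signature: variables sorted into exogenous and endogenous, each with a
finite nonempty range of values. -/
structure Sig : Type 1 where
  Var : Type
  exo : Var → Prop
  Val : Var → Type
  [decEqVar : DecidableEq Var]
  [finVar : Fintype Var]
  [neVar : Nonempty Var]
  [decEqVal : ∀ X : Var, DecidableEq (Val X)]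
  [finVal : ∀ X : Var, Fintype (Val X)]
  [neVal : ∀ X : Var, Nonempty (Val X)]

attribute [instance] Sig.decEqVar Sig.finVar Sig.neVar Sig.decEqVal Sig.finVal Sig.neVal

variable {S : Sig}

/-- A valuation: a value for each variable. -/
abbrev Env (S : Sig) : Type := ∀ X : S.Var, S.Val X

instance : Nonempty (Env S) := ⟨fun X => Classical.arbitrary (S.Val X)⟩

/-- Values for all variables other than `V`. -/
abbrev Others (S : Sig) (V : S.Var) : Type := ∀ X : {X : S.Var // X ≠ V}, S.Val X.val

/-- The restriction of a valuation to the variables other than `V`. -/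
def Env.restrict (A : Env S) (V : S.Var) : Others S V := fun X => A X.val

/-- A family of structural functions (only the components at endogenous variables
are meaningful). -/
abbrev StructFuns (S : Sig) : Type := ∀ V : S.Var, Others S V → S.Val V

/-- A valuation complies with the structural functions: the value of each endogenous
variable is obtained by applying its structural function to the values of all
other variables. -/
def Complies (F : StructFuns S) (A : Env S) : Prop :=
  ∀ V : S.Var, ¬ S.exo V → A V = F V (A.restrict V)

/-- The endogenous variable `V` is directly causally affected by `X` under `F`. -/
def DirAff (F : StructFuns S) (X V : S.Var) : Prop :=
  ¬ S.exo V ∧ ∃ (h : X ≠ V) (g : Others S V) (x₁ x₂ : S.Val X),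
    x₁ ≠ x₂ ∧
      F V (Function.update g ⟨X, h⟩ x₁) ≠ F V (Function.update g ⟨X, h⟩ x₂)

/-- `F` is recursive: the transitive closure of the direct causal dependence
relation is asymmetric (transitivity is automatic for `Relation.TransGen`). -/
def RecursiveF (F : StructFuns S) : Prop :=
  ∀ a b : S.Var, Relation.TransGen (DirAff F) a b → ¬ Relation.TransGen (DirAff F) b a

/-- An assignment of values to a set of pairwise distinct variables. -/
abbrev Intervention (S : Sig) : Type := ∀ X : S.Var, Option (S.Val X)

/-- The empty assignment. -/
def iEmpty (S : Sig) : Intervention S := fun _ => none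

/-- Extend an assignment by additionally setting `Y` to `y` (overriding). -/
def iUpd (I : Intervention S) (Y : S.Var) (y : S.Val Y) : Intervention S :=
  Function.update I Y (some y)

/-- Combine assignments, the second overriding the first:  `[X⃗ := x⃗, Y⃗ := y⃗]`. -/
def icomp (I J : Intervention S) : Intervention S := fun W =>
  match J W with
  | some v => some v
  | none => I W

/-- The intervened family of structural functions: intervened variables get the
constant function returning the assigned value; the rest are unchanged. -/
def intF (F : StructFuns S) (I : Intervention S) : StructFuns S :=
  fun V g => (I V).getD (F V g)

/-- `A'` is the result of intervening with `I` on the valuation `A` (w.r.t. `F`):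
exogenous intervened variables get the assigned value, exogenous non-intervened
variables keep their value, and each endogenous variable complies with its new
structural function. -/
def IntervenedVal (F : StructFuns S) (A : Env S) (I : Intervention S) (A' : Env S) : Prop :=
  (∀ X : S.Var, S.exo X → ∀ v : S.Val X, I X = some v → A' X = v) ∧
  (∀ X : S.Var, S.exo X → I X = none → A' X = A X) ∧
  (∀ V : S.Var, ¬ S.exo V → A' V = intF F I V (A'.restrict V))

/-- The intervened valuation (unique when `F` is recursive). -/
noncomputable def intVal (F : StructFuns S) (A : Env S) (I : Intervention S) : Env S :=
  Classical.epsilon (IntervenedVal F A I)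

/-- The language L_C: atoms `Y = y`, negation, conjunction, interventionist
counterfactual operators. -/
inductive Form (S : Sig) : Type where
  | eq (Y : S.Var) (y : S.Val Y) : Form S
  | neg (φ : Form S) : Form S
  | conj (φ ψ : Form S) : Form S
  | int (I : Intervention S) (φ : Form S) : Form S

namespace Form

/-- Material implication, defined from `¬` and `∧` as usual. -/
def impl (φ ψ : Form S) : Form S := Form.neg (Form.conj φ (Form.neg ψ))

/-- Disjunction, defined from `¬` and `∧` as usual. -/
def orF (φ ψ : Form S) : Form S := Form.neg (Form.conj (Form.neg φ) (Form.neg ψ))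

/-- Biconditional. -/
def iffF (φ ψ : Form S) : Form S := Form.conj (impl φ ψ) (impl ψ φ)

end Form

/-- A canonical contradiction. -/
noncomputable def botF (S : Sig) : Form S :=
  let X : S.Var := Classical.arbitrary S.Var
  let x : S.Val X := Classical.arbitrary (S.Val X)
  Form.conj (Form.eq X x) (Form.neg (Form.eq X x))

/-- A canonical tautology. -/
noncomputable def topF (S : Sig) : Form S := Form.neg (botF S)

/-- Disjunction of a list of formulas (the empty disjunction is a contradiction). -/
noncomputable def bigOr : List (Form S) → Form S
  | [] => botF S
  | φ :: l => l.foldl Form.orF φ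

/-- Conjunction of a list of formulas (the empty conjunction is a tautology). -/
noncomputable def bigConj : List (Form S) → Form S
  | [] => topF S
  | φ :: l => l.foldl Form.conj φ

/-- `φ` is an instance of a propositional tautology: it evaluates to `true` under
every Boolean valuation that respects negation and conjunction (treating all
other formulas as atoms). -/
def Tauto (φ : Form S) : Prop :=
  ∀ v : Form S → Bool,
    (∀ ψ : Form S, v (Form.neg ψ) = !(v ψ)) →
    (∀ ψ χ : Form S, v (Form.conj ψ χ) = (v ψ && v χ)) →
    v φ = true

/-- The assignment `[Z⃗ := z⃗, X := x]` where `Z⃗` lists all variables other than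
`X` and `V`, used in the formula `X ⇝ V`. -/
def ltInt (X V : S.Var) (g : ∀ W : {W : S.Var // W ≠ X ∧ W ≠ V}, S.Val W.val)
    (x : S.Val X) : Intervention S := fun W =>
  if h : W = X then some (h.symm ▸ x)
  else if h' : W = V then none
  else some (g ⟨W, ⟨h, h'⟩⟩)

/-- The formula `X ⇝ V`: the disjunction, over tuples `z⃗` of values for all
variables other than `X` and `V`, distinct values `x₁ ≠ x₂` of `X` and distinct
values `v₁ ≠ v₂` of `V`, of `[Z⃗:=z⃗, X:=x₁]V=v₁ ∧ [Z⃗:=z⃗, X:=x₂]V=v₂`. -/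
noncomputable def leadsTo (X V : S.Var) : Form S :=
  bigOr ((Finset.univ.filter
      (fun p : (∀ W : {W : S.Var // W ≠ X ∧ W ≠ V}, S.Val W.val) ×
          (S.Val X × S.Val X) × (S.Val V × S.Val V) =>
        p.2.1.1 ≠ p.2.1.2 ∧ p.2.2.1 ≠ p.2.2.2)).toList.map
    (fun p =>
      Form.conj
        (Form.int (ltInt X V p.1 p.2.1.1) (Form.eq V p.2.2.1))
        (Form.int (ltInt X V p.1 p.2.1.2) (Form.eq V p.2.2.2))))

/-- The chain `X₀ ⇝ X₁ ∧ ⋯ ∧ X_k ⇝ X_{k+1}`. -/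
noncomputable def chainConj (X : ℕ → S.Var) : ℕ → Form S
  | 0 => leadsTo (X 0) (X 1)
  | n + 1 => Form.conj (chainConj X n) (leadsTo (X (n + 1)) (X (n + 2)))

/-- `ψ₁ → (ψ₂ → ⋯ → (ψₙ → φ))` for a list of premises. -/
def impsFrom : List (Form S) → Form S → Form S
  | [], φ => φ
  | ψ :: l, φ => Form.impl ψ (impsFrom l φ)

/-- Satisfaction of an L_C formula in a causal model `⟨F, A⟩`. -/
def SatC : Form S → StructFuns S → Env S → Prop
  | Form.eq Y y, _, A => A Y = y
  | Form.neg φ, F, A => ¬ SatC φ F A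
  | Form.conj φ ψ, F, A => SatC φ F A ∧ SatC ψ F A
  | Form.int I φ, F, A => SatC φ (intF F I) (intVal F A I)

/-- The proof system L_C. -/
inductive ThmC : Form S → Prop where
  | taut : ∀ {φ : Form S}, Tauto φ → ThmC φ
  | mp : ∀ {φ ψ : Form S}, ThmC (Form.impl φ ψ) → ThmC φ → ThmC ψ
  | a1 : ∀ (I : Intervention S) (Y : S.Var) (y y' : S.Val Y), y ≠ y' →
      ThmC (Form.impl (Form.int I (Form.eq Y y)) (Form.neg (Form.int I (Form.eq Y y'))))
  | a2 : ∀ (I : Intervention S) (Y : S.Var),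
      ThmC (bigOr (((Finset.univ : Finset (S.Val Y)).toList).map
        (fun y => Form.int I (Form.eq Y y))))
  | a3 : ∀ (I : Intervention S) (Y Z : S.Var) (y : S.Val Y) (z : S.Val Z),
      ThmC (Form.impl (Form.conj (Form.int I (Form.eq Y y)) (Form.int I (Form.eq Z z)))
        (Form.int (iUpd I Y y) (Form.eq Z z)))
  | a4 : ∀ (I : Intervention S) (Y : S.Var) (y : S.Val Y),
      ThmC (Form.int (iUpd I Y y) (Form.eq Y y))
  | a5 : ∀ (I : Intervention S) (Y Z : S.Var) (y : S.Val Y) (z : S.Val Z), Y ≠ Z →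
      ThmC (Form.impl
        (Form.conj (Form.int (iUpd I Y y) (Form.eq Z z)) (Form.int (iUpd I Z z) (Form.eq Y y)))
        (Form.int I (Form.eq Z z)))
  | a6 : ∀ (X : ℕ → S.Var) (k : ℕ),
      (∀ i : ℕ, i ≤ k → X i ≠ X (i + 1)) → X (k + 1) ≠ X 0 →
      ThmC (Form.impl (chainConj X k) (Form.neg (leadsTo (X (k + 1)) (X 0))))
  | a7 : ∀ (I : Intervention S) (U : S.Var) (u : S.Val U), S.exo U → I U = none →
      ThmC (Form.iffF (Form.int (iEmpty S) (Form.eq U u)) (Form.int I (Form.eq U u)))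
  | aEmpty : ∀ (Y : S.Var) (y : S.Val Y),
      ThmC (Form.iffF (Form.eq Y y) (Form.int (iEmpty S) (Form.eq Y y)))
  | aNeg : ∀ (I : Intervention S) (φ : Form S),
      ThmC (Form.iffF (Form.int I (Form.neg φ)) (Form.neg (Form.int I φ)))
  | aConj : ∀ (I : Intervention S) (φ ψ : Form S),
      ThmC (Form.iffF (Form.int I (Form.conj φ ψ))
        (Form.conj (Form.int I φ) (Form.int I ψ)))
  | aIntInt : ∀ (I J : Intervention S) (φ : Form S),
      ThmC (Form.iffF (Form.int I (Form.int J φ)) (Form.int (icomp I J) φ))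

/-- Strong derivability from a set of premises in L_C. -/
def ProvC (Γ : Set (Form S)) (φ : Form S) : Prop :=
  ∃ l : List (Form S), (∀ ψ ∈ l, ψ ∈ Γ) ∧ ThmC (impsFrom l φ)


/-! ### Auxiliary development -/

section Aux

variable {S : Sig}

/-! #### Basic semantic lemmas -/

@[simp] lemma satC_eq (Y : S.Var) (y : S.Val Y) (F : StructFuns S) (A : Env S) :
    SatC (Form.eq Y y) F A ↔ A Y = y := Iff.rfl

@[simp] lemma satC_neg (φ : Form S) (F : StructFuns S) (A : Env S) :
    SatC (Form.neg φ) F A ↔ ¬ SatC φ F A := Iff.rfl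

@[simp] lemma satC_conj (φ ψ : Form S) (F : StructFuns S) (A : Env S) :
    SatC (Form.conj φ ψ) F A ↔ SatC φ F A ∧ SatC ψ F A := Iff.rfl

@[simp] lemma satC_int (I : Intervention S) (φ : Form S) (F : StructFuns S) (A : Env S) :
    SatC (Form.int I φ) F A ↔ SatC φ (intF F I) (intVal F A I) := Iff.rfl

@[simp] lemma satC_impl (φ ψ : Form S) (F : StructFuns S) (A : Env S) :
    SatC (Form.impl φ ψ) F A ↔ (SatC φ F A → SatC ψ F A) := by
  simp only [Form.impl, satC_neg, satC_conj, not_and, not_not]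

@[simp] lemma satC_orF (φ ψ : Form S) (F : StructFuns S) (A : Env S) :
    SatC (Form.orF φ ψ) F A ↔ (SatC φ F A ∨ SatC ψ F A) := by
  simp [Form.orF]; tauto

@[simp] lemma satC_iffF (φ ψ : Form S) (F : StructFuns S) (A : Env S) :
    SatC (Form.iffF φ ψ) F A ↔ (SatC φ F A ↔ SatC ψ F A) := by
  simp [Form.iffF]; tauto

@[simp] lemma satC_botF (F : StructFuns S) (A : Env S) : ¬ SatC (botF S) F A := by
  simp [botF]

lemma satC_foldl_orF (l : List (Form S)) (φ : Form S) (F : StructFuns S) (A : Env S) :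
    SatC (l.foldl Form.orF φ) F A ↔ SatC φ F A ∨ ∃ ψ ∈ l, SatC ψ F A := by
  induction l generalizing φ with
  | nil => simp
  | cons χ l ih => simp [List.foldl_cons, ih]; tauto

lemma satC_bigOr (l : List (Form S)) (F : StructFuns S) (A : Env S) :
    SatC (bigOr l) F A ↔ ∃ ψ ∈ l, SatC ψ F A := by
  cases l with
  | nil => simp [bigOr]
  | cons φ l => simp only [bigOr, satC_foldl_orF]; simp

lemma satC_impsFrom (l : List (Form S)) (φ : Form S) (F : StructFuns S) (A : Env S)
    (hl : ∀ ψ ∈ l, SatC ψ F A) (h : SatC (impsFrom l φ) F A) : SatC φ F A := by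
  induction l with
  | nil => exact h
  | cons χ l ih =>
      refine ih (fun ψ hψ => hl ψ (by simp [hψ])) ?_
      exact (satC_impl _ _ F A).1 h (hl χ (by simp))

/-! #### Boolean valuation lemmas (for `Tauto` instances) -/

section Val

variable (v : Form S → Bool)
variable (hneg : ∀ ψ : Form S, v (Form.neg ψ) = !(v ψ))
variable (hconj : ∀ ψ χ : Form S, v (Form.conj ψ χ) = (v ψ && v χ))

include hneg hconj

lemma v_impl (φ ψ : Form S) : v (Form.impl φ ψ) = (!(v φ) || v ψ) := by
  simp [Form.impl, hneg, hconj]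

lemma v_orF (φ ψ : Form S) : v (Form.orF φ ψ) = (v φ || v ψ) := by
  simp [Form.orF, hneg, hconj]

lemma v_iffF (φ ψ : Form S) : v (Form.iffF φ ψ) = (v φ == v ψ) := by
  simp [Form.iffF, hconj, v_impl v hneg hconj]
  cases v φ <;> cases v ψ <;> simp

lemma v_botF : v (botF S) = false := by
  simp [botF, hconj, hneg]

lemma v_foldl_orF (l : List (Form S)) (φ : Form S) :
    v (l.foldl Form.orF φ) = (v φ || l.any v) := by
  induction l generalizing φ with
  | nil => simp
  | cons χ l ih => simp [List.foldl_cons, ih, v_orF v hneg hconj, Bool.or_assoc]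

lemma v_bigOr (l : List (Form S)) : v (bigOr l) = l.any v := by
  cases l with
  | nil => simp [bigOr, v_botF v hneg hconj]
  | cons φ l => simp [bigOr, v_foldl_orF v hneg hconj]

lemma v_impsFrom (l : List (Form S)) (φ : Form S) :
    v (impsFrom l φ) = (!(l.all v) || v φ) := by
  induction l with
  | nil => simp [impsFrom]
  | cons χ l ih =>
      simp [impsFrom, v_impl v hneg hconj, ih, Bool.or_assoc]

end Val

/-! #### Proof-theoretic toolkit -/

lemma thm_and_intro {φ ψ : Form S} (h1 : ThmC φ) (h2 : ThmC ψ) :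
    ThmC (Form.conj φ ψ) := by
  have t : ThmC (Form.impl φ (Form.impl ψ (Form.conj φ ψ))) := by
    apply ThmC.taut
    intro v hneg hconj
    simp [v_impl v hneg hconj, hconj]
    cases v φ <;> cases v ψ <;> simp
  exact (t.mp h1).mp h2

lemma provC_of_thm {Γ : Set (Form S)} {φ : Form S} (h : ThmC φ) : ProvC Γ φ :=
  ⟨[], by simp, h⟩

lemma provC_of_mem {Γ : Set (Form S)} {φ : Form S} (h : φ ∈ Γ) : ProvC Γ φ := by
  refine ⟨[φ], by simpa using h, ?_⟩
  apply ThmC.taut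
  intro v hneg hconj
  simp [impsFrom, v_impl v hneg hconj]

lemma provC_mono {Γ Γ' : Set (Form S)} {φ : Form S} (hΓ : Γ ⊆ Γ') (h : ProvC Γ φ) :
    ProvC Γ' φ := by
  obtain ⟨l, hl, ht⟩ := h
  exact ⟨l, fun ψ hψ => hΓ (hl ψ hψ), ht⟩

lemma provC_mp {Γ : Set (Form S)} {φ ψ : Form S}
    (h1 : ProvC Γ (Form.impl φ ψ)) (h2 : ProvC Γ φ) : ProvC Γ ψ := by
  obtain ⟨l1, hl1, ht1⟩ := h1
  obtain ⟨l2, hl2, ht2⟩ := h2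
  refine ⟨l1 ++ l2, ?_, ?_⟩
  · intro χ hχ
    rcases List.mem_append.1 hχ with h | h
    · exact hl1 χ h
    · exact hl2 χ h
  · have t : ThmC (Form.impl (impsFrom l1 (Form.impl φ ψ))
        (Form.impl (impsFrom l2 φ) (impsFrom (l1 ++ l2) ψ))) := by
      apply ThmC.taut
      intro v hneg hconj
      simp only [v_impl v hneg hconj, v_impsFrom v hneg hconj, List.all_append]
      cases h1 : v φ <;> cases h2 : v ψ <;> cases h3 : l1.all v <;> cases h4 : l2.all v <;> simp
    exact (t.mp ht1).mp ht2

lemma provC_deduction {Γ : Set (Form S)} {φ ψ : Form S}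
    (h : ProvC (insert ψ Γ) φ) : ProvC Γ (Form.impl ψ φ) := by
  classical
  obtain ⟨l, hl, ht⟩ := h
  refine ⟨l.filter (fun χ => χ ∈ Γ), ?_, ?_⟩
  · intro χ hχ
    simpa using (List.mem_filter.1 hχ).2
  · have t : ThmC (Form.impl (impsFrom l φ)
        (impsFrom (l.filter (fun χ => χ ∈ Γ)) (Form.impl ψ φ))) := by
      apply ThmC.taut
      intro v hneg hconj
      simp only [v_impl v hneg hconj, v_impsFrom v hneg hconj]
      by_cases hall : (l.filter (fun χ => χ ∈ Γ)).all v = true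
      · by_cases hψ : v ψ = true
        · have : l.all v = true := by
            rw [List.all_eq_true] at hall ⊢
            intro χ hχ
            rcases hl χ hχ with h | h
            · rw [h]; exact hψ
            · exact hall χ (List.mem_filter.2 ⟨hχ, by simpa using h⟩)
          rw [this, hψ]
          cases v φ <;> simp
        · simp at hψ
          rw [hψ]
          cases l.all v <;> cases v φ <;> simp
      · rw [Bool.not_eq_true] at hall
        rw [hall]
        cases l.all v <;> cases v φ <;> simp
    exact t.mp ht

lemma provC_bot_elim {Γ : Set (Form S)} (h : ProvC Γ (botF S)) (φ : Form S) : ProvC Γ φ := by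
  refine provC_mp (provC_of_thm ?_) h
  apply ThmC.taut
  intro v hneg hconj
  simp [v_impl v hneg hconj, v_botF v hneg hconj]

/-! #### Existence and uniqueness of intervened valuations -/

lemma transGen_dirAff_wf {F : StructFuns S} (hF : RecursiveF F) :
    WellFounded (Relation.TransGen (DirAff F)) := by
  letI : IsTrans S.Var (Relation.TransGen (DirAff F)) :=
    ⟨fun a b c => Relation.TransGen.trans⟩
  letI : IsIrrefl S.Var (Relation.TransGen (DirAff F)) :=
    ⟨fun a h => hF a a h h⟩
  exact Finite.wellFounded_of_trans_of_irrefl _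

/-- A structural function only depends on the values of the variables that
directly causally affect its variable. -/
lemma F_congr {F : StructFuns S} (V : S.Var) (hV : ¬ S.exo V) :
    ∀ (g g' : Others S V),
      (∀ X : {X : S.Var // X ≠ V}, DirAff F X.val V → g X = g' X) → F V g = F V g' := by
  classical
  suffices H : ∀ (n : ℕ) (g g' : Others S V),
      (∀ X : {X : S.Var // X ≠ V}, DirAff F X.val V → g X = g' X) →
      (Finset.univ.filter (fun X => g X ≠ g' X)).card ≤ n → F V g = F V g' by
    intro g g' h
    exact H _ g g' h le_rfl
  intro n
  induction n with
  | zero =>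
      intro g g' h hcard
      have : g = g' := by
        funext X
        by_contra hne
        have : X ∈ Finset.univ.filter (fun X => g X ≠ g' X) := by simp [hne]
        have := Finset.card_pos.2 ⟨X, this⟩
        omega
      rw [this]
  | succ n ih =>
      intro g g' h hcard
      by_cases heq : g = g'
      · rw [heq]
      · have : ∃ X₀, g X₀ ≠ g' X₀ := by
          by_contra hno
          push_neg at hno
          exact heq (funext hno)
        obtain ⟨X₀, hX₀⟩ := this
        set g'' : Others S V := Function.update g X₀ (g' X₀) with hg''
        have step : F V g = F V g'' := by
          by_contra hne
          have hda : DirAff F X₀.val V := by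
            refine ⟨hV, X₀.prop, g, g X₀, g' X₀, hX₀, ?_⟩
            have e1 : Function.update g ⟨X₀.val, X₀.prop⟩ (g X₀) = g := by
              exact Function.update_eq_self _ _
            rw [e1]
            exact hne
          exact hX₀ (h X₀ hda)
        rw [step]
        apply ih
        · intro X hX
          by_cases hXX : X = X₀
          · subst hXX; simp [hg'']
          · rw [hg'', Function.update_of_ne hXX]
            exact h X hX
        · have hsub : (Finset.univ.filter (fun X => g'' X ≠ g' X)) ⊆
              (Finset.univ.filter (fun X => g X ≠ g' X)).erase X₀ := by
            intro X hX
            simp only [Finset.mem_filter, Finset.mem_univ, true_and] at hX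
            have hXX : X ≠ X₀ := by
              intro hc; subst hc; simp [hg''] at hX
            refine Finset.mem_erase.2 ⟨hXX, ?_⟩
            simp only [Finset.mem_filter, Finset.mem_univ, true_and]
            rwa [hg'', Function.update_of_ne hXX] at hX
          have hX₀mem : X₀ ∈ Finset.univ.filter (fun X => g X ≠ g' X) := by simp [hX₀]
          have := Finset.card_le_card hsub
          have := Finset.card_erase_of_mem hX₀mem
          omega

lemma intervenedVal_exists {F : StructFuns S} (hF : RecursiveF F) (A : Env S)
    (I : Intervention S) : ∃ B : Env S, IntervenedVal F A I B := by
  classical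
  have hwf := transGen_dirAff_wf hF
  set B : Env S := hwf.fix (fun V rec => (I V).getD (if S.exo V then A V else
      F V (fun X => if h : Relation.TransGen (DirAff F) X.val V then rec X.val h
        else Classical.arbitrary _))) with hBdef
  have hfix : ∀ V, B V = (I V).getD (if S.exo V then A V else
      F V (fun X => if h : Relation.TransGen (DirAff F) X.val V then B X.val
        else Classical.arbitrary _)) := fun V => hwf.fix_eq _ V
  refine ⟨B, ?_, ?_, ?_⟩
  · intro X hexo v hIv
    rw [hfix X, hIv]
    rfl
  · intro X hexo hIv
    rw [hfix X, hIv, if_pos hexo]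
    rfl
  · intro V hV
    rw [hfix V]
    show _ = (I V).getD (F V (B.restrict V))
    rw [if_neg hV]
    congr 1
    apply F_congr V hV
    intro X hX
    simp [Relation.TransGen.single hX, Env.restrict]

lemma intervenedVal_unique {F : StructFuns S} (hF : RecursiveF F) {A : Env S}
    {I : Intervention S} {B C : Env S} (hB : IntervenedVal F A I B)
    (hC : IntervenedVal F A I C) : B = C := by
  obtain ⟨hB1, hB2, hB3⟩ := hB
  obtain ⟨hC1, hC2, hC3⟩ := hC
  funext V
  induction V using (transGen_dirAff_wf hF).induction with
  | _ V ih =>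
    by_cases hexo : S.exo V
    · cases hI : I V with
      | none => rw [hB2 V hexo hI, hC2 V hexo hI]
      | some v => rw [hB1 V hexo v hI, hC1 V hexo v hI]
    · rw [hB3 V hexo, hC3 V hexo]
      show (I V).getD (F V (B.restrict V)) = (I V).getD (F V (C.restrict V))
      congr 1
      apply F_congr V hexo
      intro X hX
      exact ih X.val (Relation.TransGen.single hX)

lemma intVal_spec {F : StructFuns S} (hF : RecursiveF F) (A : Env S)
    (I : Intervention S) : IntervenedVal F A I (intVal F A I) :=
  Classical.epsilon_spec (intervenedVal_exists hF A I)

lemma intVal_eq {F : StructFuns S} (hF : RecursiveF F) {A : Env S}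
    {I : Intervention S} {B : Env S} (hB : IntervenedVal F A I B) :
    intVal F A I = B :=
  intervenedVal_unique hF (intVal_spec hF A I) hB

lemma intVal_some {F : StructFuns S} (hF : RecursiveF F) {A : Env S}
    {I : Intervention S} {X : S.Var} {v : S.Val X} (h : I X = some v) :
    intVal F A I X = v := by
  obtain ⟨h1, h2, h3⟩ := intVal_spec hF A I
  by_cases hexo : S.exo X
  · exact h1 X hexo v h
  · rw [h3 X hexo]
    simp [intF, h]

lemma intVal_exo_none {F : StructFuns S} (hF : RecursiveF F) {A : Env S}
    {I : Intervention S} {X : S.Var} (hexo : S.exo X) (h : I X = none) :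
    intVal F A I X = A X := (intVal_spec hF A I).2.1 X hexo h

lemma intVal_endo_none {F : StructFuns S} (hF : RecursiveF F) {A : Env S}
    {I : Intervention S} {V : S.Var} (hV : ¬ S.exo V) (h : I V = none) :
    intVal F A I V = F V ((intVal F A I).restrict V) := by
  rw [(intVal_spec hF A I).2.2 V hV]
  simp [intF, h]

@[simp] lemma intF_empty {F : StructFuns S} : intF F (iEmpty S) = F := rfl

lemma intervenedVal_empty {F : StructFuns S} {A : Env S} (hA : Complies F A) :
    IntervenedVal F A (iEmpty S) A := by
  refine ⟨?_, ?_, ?_⟩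
  · intro X _ v h; simp [iEmpty] at h
  · intro X _ _; rfl
  · intro V hV; exact hA V hV

lemma intVal_empty {F : StructFuns S} (hF : RecursiveF F) {A : Env S}
    (hA : Complies F A) : intVal F A (iEmpty S) = A :=
  intVal_eq hF (intervenedVal_empty hA)

lemma dirAff_intF {F : StructFuns S} {I : Intervention S} {X V : S.Var}
    (h : DirAff (intF F I) X V) : DirAff F X V := by
  obtain ⟨hV, hne, g, x₁, x₂, hx, hne'⟩ := h
  cases hI : I V with
  | some v => exfalso; apply hne'; simp [intF, hI]
  | none => exact ⟨hV, hne, g, x₁, x₂, hx, by simpa [intF, hI] using hne'⟩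

lemma recursiveF_intF {F : StructFuns S} (hF : RecursiveF F) (I : Intervention S) :
    RecursiveF (intF F I) := fun a b hab hba =>
  hF a b (Relation.TransGen.mono (fun _ _ => dirAff_intF) _ _ hab)
    (Relation.TransGen.mono (fun _ _ => dirAff_intF) _ _ hba)

lemma intF_icomp {F : StructFuns S} (I J : Intervention S) :
    intF (intF F I) J = intF F (icomp I J) := by
  funext V g
  simp only [intF, icomp]
  cases J V <;> rfl

lemma intVal_icomp {F : StructFuns S} (hF : RecursiveF F) (A : Env S)
    (I J : Intervention S) :
    intVal (intF F I) (intVal F A I) J = intVal F A (icomp I J) := by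
  apply intVal_eq (recursiveF_intF hF I)
  obtain ⟨h1, h2, h3⟩ := intVal_spec hF A (icomp I J)
  refine ⟨?_, ?_, ?_⟩
  · intro X hexo v hJ
    exact h1 X hexo v (by simp [icomp, hJ])
  · intro X hexo hJ
    cases hI : I X with
    | some v =>
        rw [intVal_some hF (show icomp I J X = some v by simp [icomp, hJ, hI]),
          intVal_some hF hI]
    | none =>
        rw [h2 X hexo (by simp [icomp, hJ, hI]), intVal_exo_none hF hexo hI]
  · intro V hV
    rw [h3 V hV, ← intF_icomp]

lemma intervenedVal_extend {F : StructFuns S} {A : Env S} {I : Intervention S}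
    {B : Env S} {Y : S.Var} {y : S.Val Y} (hB : IntervenedVal F A I B)
    (hY : B Y = y) : IntervenedVal F A (iUpd I Y y) B := by
  obtain ⟨h1, h2, h3⟩ := hB
  refine ⟨?_, ?_, ?_⟩
  · intro X hexo v hX
    by_cases hXY : X = Y
    · subst hXY
      simp only [iUpd, Function.update_self] at hX
      cases hX
      exact hY
    · rw [iUpd, Function.update_of_ne hXY] at hX
      exact h1 X hexo v hX
  · intro X hexo hX
    by_cases hXY : X = Y
    · subst hXY; simp [iUpd] at hX
    · rw [iUpd, Function.update_of_ne hXY] at hX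
      exact h2 X hexo hX
  · intro V hV
    by_cases hVY : V = Y
    · subst hVY
      show B V = intF F (iUpd I V y) V _
      simp only [intF, iUpd, Function.update_self, Option.getD_some]
      exact hY
    · show B V = intF F (iUpd I Y y) V _
      rw [h3 V hV]
      simp only [intF, iUpd, Function.update_of_ne hVY]

/-! #### `leadsTo` and `chainConj` semantics -/

lemma ltInt_self {X V : S.Var} (g : ∀ W : {W : S.Var // W ≠ X ∧ W ≠ V}, S.Val W.val)
    (x : S.Val X) : ltInt X V g x X = some x := by
  simp [ltInt]

lemma ltInt_V {X V : S.Var} (hXV : X ≠ V)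
    (g : ∀ W : {W : S.Var // W ≠ X ∧ W ≠ V}, S.Val W.val) (x : S.Val X) :
    ltInt X V g x V = none := by
  rw [ltInt, dif_neg (Ne.symm hXV), dif_pos rfl]

lemma ltInt_other {X V W : S.Var} (hWX : W ≠ X) (hWV : W ≠ V)
    (g : ∀ W : {W : S.Var // W ≠ X ∧ W ≠ V}, S.Val W.val) (x : S.Val X) :
    ltInt X V g x W = some (g ⟨W, hWX, hWV⟩) := by
  rw [ltInt, dif_neg hWX, dif_neg hWV]

lemma dirAff_of_satC_leadsTo {F : StructFuns S} {A : Env S} (hF : RecursiveF F)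
    {X V : S.Var} (hXV : X ≠ V) (h : SatC (leadsTo X V) F A) : DirAff F X V := by
  rw [leadsTo, satC_bigOr] at h
  obtain ⟨ψ, hmem, hsat⟩ := h
  rw [List.mem_map] at hmem
  obtain ⟨p, hp, rfl⟩ := hmem
  rw [Finset.mem_toList, Finset.mem_filter] at hp
  obtain ⟨-, hx, hv⟩ := hp
  obtain ⟨hs1, hs2⟩ := hsat
  set g := p.1
  set x₁ := p.2.1.1
  set x₂ := p.2.1.2
  set v₁ := p.2.2.1
  set v₂ := p.2.2.2
  set B₁ := intVal F A (ltInt X V g x₁) with hB₁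
  set B₂ := intVal F A (ltInt X V g x₂) with hB₂
  have hs1' : B₁ V = v₁ := hs1
  have hs2' : B₂ V = v₂ := hs2
  have hB₁X : B₁ X = x₁ := intVal_some hF (ltInt_self g x₁)
  have hB₂X : B₂ X = x₂ := intVal_some hF (ltInt_self g x₂)
  have hagree : ∀ W : S.Var, ∀ (hWX : W ≠ X) (hWV : W ≠ V), B₁ W = B₂ W := by
    intro W hWX hWV
    rw [hB₁, hB₂, intVal_some hF (ltInt_other hWX hWV g x₁),
      intVal_some hF (ltInt_other hWX hWV g x₂)]
  by_cases hV : S.exo V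
  · exfalso
    apply hv
    rw [← hs1', ← hs2', hB₁, hB₂, intVal_exo_none hF hV (ltInt_V hXV g x₁),
      intVal_exo_none hF hV (ltInt_V hXV g x₂)]
  · have e1 : F V (B₁.restrict V) = v₁ := by
      rw [← intVal_endo_none hF hV (ltInt_V hXV g x₁)]
      exact hs1'
    have e2 : F V (B₂.restrict V) = v₂ := by
      rw [← intVal_endo_none hF hV (ltInt_V hXV g x₂)]
      exact hs2'
    refine ⟨hV, hXV, B₁.restrict V, x₁, x₂, hx, ?_⟩
    have u1 : Function.update (B₁.restrict V) ⟨X, hXV⟩ x₁ = B₁.restrict V := by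
      conv_lhs => rw [show x₁ = (B₁.restrict V) ⟨X, hXV⟩ from hB₁X.symm]
      exact Function.update_eq_self _ _
    have u2 : Function.update (B₁.restrict V) ⟨X, hXV⟩ x₂ = B₂.restrict V := by
      funext W
      by_cases hW : W = ⟨X, hXV⟩
      · subst hW
        rw [Function.update_self]
        exact hB₂X.symm
      · rw [Function.update_of_ne hW]
        exact hagree W.val (fun hc => hW (Subtype.ext hc)) W.prop
    rw [u1, u2, e1, e2]
    exact hv

lemma satC_chainConj {F : StructFuns S} {A : Env S} {X : ℕ → S.Var} {n : ℕ} :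
    SatC (chainConj X n) F A ↔ ∀ i ≤ n, SatC (leadsTo (X i) (X (i + 1))) F A := by
  induction n with
  | zero =>
      constructor
      · intro h i hi
        interval_cases i
        exact h
      · intro h
        exact h 0 le_rfl
  | succ n ih =>
      rw [chainConj, satC_conj, ih]
      constructor
      · rintro ⟨h1, h2⟩ i hi
        rcases Nat.lt_or_ge i (n + 1) with h | h
        · exact h1 i (by omega)
        · have : i = n + 1 := by omega
          subst this
          exact h2
      · intro h
        exact ⟨fun i hi => h i (by omega), h (n + 1) le_rfl⟩

/-! #### Soundness -/

theorem soundness_thm {φ : Form S} (h : ThmC φ) :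
    ∀ (F : StructFuns S) (A : Env S), RecursiveF F → Complies F A → SatC φ F A := by
  induction h with
  | @taut φ ht =>
      intro F A hF hA
      have := ht (fun ψ => decide (SatC ψ F A)) (fun ψ => by simp) (fun ψ χ => by simp)
      simpa using this
  | mp h1 h2 ih1 ih2 =>
      intro F A hF hA
      exact (satC_impl _ _ F A).1 (ih1 F A hF hA) (ih2 F A hF hA)
  | a1 I Y y y' hyy =>
      intro F A hF hA
      simp only [satC_impl, satC_neg, satC_int, satC_eq]
      intro h1 h2
      rw [h1] at h2
      exact hyy h2
  | a2 I Y =>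
      intro F A hF hA
      rw [satC_bigOr]
      exact ⟨Form.int I (Form.eq Y (intVal F A I Y)),
        List.mem_map.2 ⟨_, by simp, rfl⟩, rfl⟩
  | a3 I Y Z y z =>
      intro F A hF hA
      simp only [satC_impl, satC_conj, satC_int, satC_eq]
      rintro ⟨h1, h2⟩
      rw [intVal_eq hF (intervenedVal_extend (intVal_spec hF A I) h1)]
      exact h2
  | a4 I Y y =>
      intro F A hF hA
      show intVal F A (iUpd I Y y) Y = y
      exact intVal_some hF (by simp [iUpd])
  | a5 I Y Z y z hYZ =>
      intro F A hF hA
      simp only [satC_impl, satC_conj, satC_int, satC_eq]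
      rintro ⟨h1, h2⟩
      cases hIZ : I Z with
      | some z' =>
          have hz' : intVal F A (iUpd I Y y) Z = z' :=
            intVal_some hF (by rw [iUpd, Function.update_of_ne (Ne.symm hYZ)]; exact hIZ)
          have hz : z' = z := hz'.symm.trans h1
          rw [intVal_some hF hIZ]
          exact hz
      | none =>
        cases hIY : I Y with
        | some y' =>
            have h2' : intVal F A (iUpd I Z z) Y = y' :=
              intVal_some hF (by rw [iUpd, Function.update_of_ne hYZ]; exact hIY)
            have hy : y' = y := h2'.symm.trans h2
            have hIeq : iUpd I Y y = I := by
              funext W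
              by_cases hW : W = Y
              · subst hW; rw [iUpd, Function.update_self, hIY, hy]
              · rw [iUpd, Function.update_of_ne hW]
            rwa [hIeq] at h1
        | none =>
            set B₁ := intVal F A (iUpd I Y y) with hB₁def
            set B₂ := intVal F A (iUpd I Z z) with hB₂def
            have s1 := intVal_spec hF A (iUpd I Y y)
            have s2 := intVal_spec hF A (iUpd I Z z)
            have e1 : IntervenedVal F A (iUpd (iUpd I Y y) Z z) B₁ :=
              intervenedVal_extend s1 h1
            have e2 : IntervenedVal F A (iUpd (iUpd I Z z) Y y) B₂ :=
              intervenedVal_extend s2 h2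
            have hcomm : iUpd (iUpd I Z z) Y y = iUpd (iUpd I Y y) Z z := by
              simp only [iUpd]
              exact (Function.update_comm hYZ (some y) (some z) I).symm
            have hBB : B₁ = B₂ := intervenedVal_unique hF e1 (hcomm ▸ e2)
            obtain ⟨a1, a2, a3⟩ := s1
            obtain ⟨b1, b2, b3⟩ := s2
            have hIB : IntervenedVal F A I B₁ := by
              refine ⟨?_, ?_, ?_⟩
              · intro W hexo v hW
                have hWY : W ≠ Y := fun hc => by subst hc; rw [hIY] at hW; cases hW
                exact a1 W hexo v (by rw [iUpd, Function.update_of_ne hWY]; exact hW)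
              · intro W hexo hW
                by_cases hWY : W = Y
                · subst hWY
                  rw [hBB]
                  exact b2 W hexo (by rw [iUpd, Function.update_of_ne hYZ]; exact hIY)
                · exact a2 W hexo (by rw [iUpd, Function.update_of_ne hWY]; exact hW)
              · intro V hV
                by_cases hVY : V = Y
                · subst hVY
                  have heq : intF F (iUpd I Z z) V = intF F I V := by
                    funext g
                    simp only [intF, iUpd]
                    rw [Function.update_of_ne hYZ]
                  have := b3 V hV
                  rw [heq] at this
                  rw [hBB]
                  exact this
                · have heq : intF F (iUpd I Y y) V = intF F I V := by
                    funext g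
                    simp only [intF, iUpd]
                    rw [Function.update_of_ne hVY]
                  have := a3 V hV
                  rwa [heq] at this
            rw [intVal_eq hF hIB]
            exact h1
  | a6 X k hadj hlast =>
      intro F A hF hA
      simp only [satC_impl, satC_neg]
      intro hchain hclose
      have hedges : ∀ i ≤ k, DirAff F (X i) (X (i + 1)) := fun i hi =>
        dirAff_of_satC_leadsTo hF (hadj i hi) (satC_chainConj.1 hchain i hi)
      have hlast' : DirAff F (X (k + 1)) (X 0) :=
        dirAff_of_satC_leadsTo hF hlast hclose
      have htg : ∀ n ≤ k, Relation.TransGen (DirAff F) (X 0) (X (n + 1)) := by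
        intro n
        induction n with
        | zero => intro _; exact Relation.TransGen.single (hedges 0 (Nat.zero_le _))
        | succ n ih =>
            intro hn
            exact Relation.TransGen.tail (ih (by omega)) (hedges (n + 1) hn)
      exact hF _ _ (htg k le_rfl) (Relation.TransGen.single hlast')
  | a7 I U u hexo hI =>
      intro F A hF hA
      rw [satC_iffF]
      show (intVal F A (iEmpty S) U = u) ↔ (intVal F A I U = u)
      rw [intVal_empty hF hA, intVal_exo_none hF hexo hI]
  | aEmpty Y y =>
      intro F A hF hA
      rw [satC_iffF]
      show (A Y = y) ↔ (intVal F A (iEmpty S) Y = y)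
      rw [intVal_empty hF hA]
  | aNeg I φ =>
      intro F A hF hA
      rw [satC_iffF]
      exact Iff.rfl
  | aConj I φ ψ =>
      intro F A hF hA
      rw [satC_iffF]
      rfl
  | aIntInt I J φ =>
      intro F A hF hA
      rw [satC_iffF]
      simp only [satC_int]
      rw [intF_icomp, intVal_icomp hF]

theorem soundness {Γ : Set (Form S)} {φ : Form S} (h : ProvC Γ φ) :
    ∀ (F : StructFuns S) (A : Env S), RecursiveF F → Complies F A →
      (∀ ψ ∈ Γ, SatC ψ F A) → SatC φ F A := by
  obtain ⟨l, hl, ht⟩ := h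
  intro F A hF hA hΓ
  exact satC_impsFrom l φ F A (fun ψ hψ => hΓ ψ (hl ψ hψ)) (soundness_thm ht F A hF hA)

/-! #### Consistency, Lindenbaum, maximal consistent sets -/

/-- Consistency of a set of formulas. -/
def ConC (Γ : Set (Form S)) : Prop := ¬ ProvC Γ (botF S)

lemma con_insert_neg {Γ : Set (Form S)} {φ : Form S} (h : ¬ ProvC Γ φ) :
    ConC (insert (Form.neg φ) Γ) := by
  intro hbot
  apply h
  have hd : ProvC Γ (Form.impl (Form.neg φ) (botF S)) := provC_deduction hbot
  refine provC_mp (provC_of_thm ?_) hd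
  apply ThmC.taut
  intro v hneg hconj
  simp only [v_impl v hneg hconj, v_botF v hneg hconj, hneg]
  cases v φ <;> simp

/-- Maximal consistent set. -/
structure MCS (Δ : Set (Form S)) : Prop where
  con : ConC Δ
  max : ∀ φ : Form S, φ ∉ Δ → ¬ ConC (insert φ Δ)

lemma lindenbaum {Γ : Set (Form S)} (h : ConC Γ) : ∃ Δ, Γ ⊆ Δ ∧ MCS Δ := by
  have H : ∀ c ⊆ {Δ : Set (Form S) | ConC Δ}, IsChain (· ⊆ ·) c → c.Nonempty →
      ∃ ub ∈ {Δ : Set (Form S) | ConC Δ}, ∀ s ∈ c, s ⊆ ub := by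
    intro c hc hchain ⟨Γ₀, hΓ₀⟩
    refine ⟨⋃₀ c, ?_, fun s hs => Set.subset_sUnion_of_mem hs⟩
    intro hbot
    obtain ⟨l, hl, ht⟩ := hbot
    have : ∃ Δ₀ ∈ c, ∀ ψ ∈ l, ψ ∈ Δ₀ := by
      clear ht
      induction l with
      | nil => exact ⟨Γ₀, hΓ₀, by simp⟩
      | cons χ l ih =>
          obtain ⟨Δ₀, hΔ₀, hall⟩ := ih (fun ψ hψ => hl ψ (by simp [hψ]))
          obtain ⟨Δ₁, hΔ₁, hχ⟩ := hl χ (by simp)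
          rcases hchain.total hΔ₀ hΔ₁ with hss | hss
          · refine ⟨Δ₁, hΔ₁, ?_⟩
            intro ψ hψ
            rcases List.mem_cons.1 hψ with rfl | hψ
            · exact hχ
            · exact hss (hall ψ hψ)
          · refine ⟨Δ₀, hΔ₀, ?_⟩
            intro ψ hψ
            rcases List.mem_cons.1 hψ with rfl | hψ
            · exact hss hχ
            · exact hall ψ hψ
    obtain ⟨Δ₀, hΔ₀, hall⟩ := this
    exact hc hΔ₀ ⟨l, hall, ht⟩
  obtain ⟨Δ, hsub, hmax⟩ := zorn_subset_nonempty {Δ : Set (Form S) | ConC Δ} H Γ h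
  refine ⟨Δ, hsub, hmax.prop, ?_⟩
  intro φ hφ hcon
  exact hφ (hmax.mem_of_prop_insert (hcon : _ ∈ {Δ : Set (Form S) | ConC Δ}))

section MCSLemmas

variable {Δ : Set (Form S)} (hΔ : MCS Δ)

include hΔ

lemma MCS.mem_of_provC {φ : Form S} (h : ProvC Δ φ) : φ ∈ Δ := by
  by_contra hφ
  apply hΔ.max φ hφ
  intro hbot
  have hd : ProvC Δ (Form.impl φ (botF S)) := provC_deduction hbot
  exact hΔ.con (provC_mp hd h)

lemma MCS.thm_mem {φ : Form S} (h : ThmC φ) : φ ∈ Δ :=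
  hΔ.mem_of_provC (provC_of_thm h)

lemma MCS.mp_mem {φ ψ : Form S} (h1 : Form.impl φ ψ ∈ Δ) (h2 : φ ∈ Δ) : ψ ∈ Δ :=
  hΔ.mem_of_provC (provC_mp (provC_of_mem h1) (provC_of_mem h2))

lemma MCS.neg_mem_iff {φ : Form S} : Form.neg φ ∈ Δ ↔ φ ∉ Δ := by
  constructor
  · intro hn hp
    apply hΔ.con
    have t : ThmC (Form.impl φ (Form.impl (Form.neg φ) (botF S))) := by
      apply ThmC.taut
      intro v hneg hconj
      simp only [v_impl v hneg hconj, v_botF v hneg hconj, hneg]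
      cases v φ <;> simp
    exact provC_mp (provC_mp (provC_of_thm t) (provC_of_mem hp)) (provC_of_mem hn)
  · intro h
    have hbot : ProvC (insert φ Δ) (botF S) := Classical.not_not.1 (hΔ.max φ h)
    have hd : ProvC Δ (Form.impl φ (botF S)) := provC_deduction hbot
    apply hΔ.mem_of_provC
    refine provC_mp (provC_of_thm ?_) hd
    apply ThmC.taut
    intro v hneg hconj
    simp only [v_impl v hneg hconj, v_botF v hneg hconj, hneg]
    cases v φ <;> simp

lemma MCS.conj_mem_iff {φ ψ : Form S} :
    Form.conj φ ψ ∈ Δ ↔ φ ∈ Δ ∧ ψ ∈ Δ := by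
  constructor
  · intro h
    constructor
    · refine hΔ.mp_mem (hΔ.thm_mem ?_) h
      apply ThmC.taut
      intro v hneg hconj
      simp only [v_impl v hneg hconj, hconj]
      cases v φ <;> cases v ψ <;> simp
    · refine hΔ.mp_mem (hΔ.thm_mem ?_) h
      apply ThmC.taut
      intro v hneg hconj
      simp only [v_impl v hneg hconj, hconj]
      cases v φ <;> cases v ψ <;> simp
  · rintro ⟨h1, h2⟩
    refine hΔ.mp_mem (hΔ.mp_mem (hΔ.thm_mem ?_) h1) h2
    apply ThmC.taut
    intro v hneg hconj
    simp only [v_impl v hneg hconj, hconj]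
    cases v φ <;> cases v ψ <;> simp

lemma MCS.iff_mem {φ ψ : Form S} (h : Form.iffF φ ψ ∈ Δ) : φ ∈ Δ ↔ ψ ∈ Δ := by
  rw [Form.iffF, hΔ.conj_mem_iff] at h
  exact ⟨fun hp => hΔ.mp_mem h.1 hp, fun hp => hΔ.mp_mem h.2 hp⟩

lemma MCS.thm_iff_mem {φ ψ : Form S} (h : ThmC (Form.iffF φ ψ)) : φ ∈ Δ ↔ ψ ∈ Δ :=
  hΔ.iff_mem (hΔ.thm_mem h)

lemma MCS.bigOr_mem {l : List (Form S)} (h : bigOr l ∈ Δ) : ∃ ψ ∈ l, ψ ∈ Δ := by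
  by_contra hno
  push_neg at hno
  have hnegs : ∀ ψ ∈ l, Form.neg ψ ∈ Δ := fun ψ hψ => hΔ.neg_mem_iff.2 (hno ψ hψ)
  have hprov : ProvC Δ (Form.neg (bigOr l)) := by
    refine ⟨l.map Form.neg, ?_, ?_⟩
    · intro χ hχ
      obtain ⟨ψ, hψ, rfl⟩ := List.mem_map.1 hχ
      exact hnegs ψ hψ
    · apply ThmC.taut
      intro v hneg hconj
      simp only [v_impsFrom v hneg hconj, v_bigOr v hneg hconj, List.all_map,
        Function.comp_def, hneg]
      by_cases hany : l.any v = true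
      · obtain ⟨ψ, hψ, hvψ⟩ := List.any_eq_true.1 hany
        have : (l.all fun ψ => !(v ψ)) = false :=
          List.all_eq_false.2 ⟨ψ, hψ, by simp [hvψ]⟩
        rw [this]
        simp
      · rw [Bool.not_eq_true] at hany
        rw [hany]
        simp
  exact (hΔ.neg_mem_iff.1 (hΔ.mem_of_provC hprov)) h

lemma MCS.mem_bigOr_of_mem {l : List (Form S)} {ψ : Form S} (hmem : ψ ∈ l)
    (h : ψ ∈ Δ) : bigOr l ∈ Δ := by
  refine hΔ.mp_mem (hΔ.thm_mem ?_) h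
  apply ThmC.taut
  intro v hneg hconj
  simp only [v_impl v hneg hconj, v_bigOr v hneg hconj]
  by_cases hv : v ψ = true
  · rw [List.any_eq_true.2 ⟨ψ, hmem, hv⟩]
    simp
  · rw [Bool.not_eq_true] at hv
    rw [hv]
    simp

end MCSLemmas

/-! #### Derived theorems about `iffF` -/

lemma thm_iff_symm {φ ψ : Form S} (t : ThmC (Form.iffF φ ψ)) : ThmC (Form.iffF ψ φ) := by
  refine ThmC.mp (ThmC.taut ?_) t
  intro v hneg hconj
  simp only [v_impl v hneg hconj, v_iffF v hneg hconj]
  cases v φ <;> cases v ψ <;> simp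

lemma thm_iff_trans {φ ψ χ : Form S} (t1 : ThmC (Form.iffF φ ψ))
    (t2 : ThmC (Form.iffF ψ χ)) : ThmC (Form.iffF φ χ) := by
  refine ThmC.mp (ThmC.mp (ThmC.taut ?_) t1) t2
  intro v hneg hconj
  simp only [v_impl v hneg hconj, v_iffF v hneg hconj]
  cases v φ <;> cases v ψ <;> cases v χ <;> simp

lemma thm_iff_neg {φ ψ : Form S} (t : ThmC (Form.iffF φ ψ)) :
    ThmC (Form.iffF (Form.neg φ) (Form.neg ψ)) := by
  refine ThmC.mp (ThmC.taut ?_) t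
  intro v hneg hconj
  simp only [v_impl v hneg hconj, v_iffF v hneg hconj, hneg]
  cases v φ <;> cases v ψ <;> simp

lemma thm_iff_conj {φ ψ φ' ψ' : Form S} (t1 : ThmC (Form.iffF φ φ'))
    (t2 : ThmC (Form.iffF ψ ψ')) :
    ThmC (Form.iffF (Form.conj φ ψ) (Form.conj φ' ψ')) := by
  refine ThmC.mp (ThmC.mp (ThmC.taut ?_) t1) t2
  intro v hneg hconj
  simp only [v_impl v hneg hconj, v_iffF v hneg hconj, hconj]
  cases v φ <;> cases v ψ <;> cases v φ' <;> cases v ψ' <;> simp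

lemma icomp_empty (J : Intervention S) : icomp (iEmpty S) J = J := by
  funext W
  simp only [icomp, iEmpty]
  cases J W <;> rfl

lemma thm_int_empty (φ : Form S) :
    ThmC (Form.iffF φ (Form.int (iEmpty S) φ)) := by
  induction φ with
  | eq Y y => exact ThmC.aEmpty Y y
  | neg φ ih =>
      have h1 := thm_iff_neg ih
      have h2 := thm_iff_symm (ThmC.aNeg (iEmpty S) φ)
      exact thm_iff_trans h1 h2
  | conj φ ψ ihφ ihψ =>
      have h1 := thm_iff_conj ihφ ihψ
      have h2 := thm_iff_symm (ThmC.aConj (iEmpty S) φ ψ)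
      exact thm_iff_trans h1 h2
  | int J φ _ =>
      have h := ThmC.aIntInt (iEmpty S) J φ
      rw [icomp_empty J] at h
      exact thm_iff_symm h

/-! #### The canonical model -/

lemma tVal_exists {Δ : Set (Form S)} (hΔ : MCS Δ) (I : Intervention S) (Y : S.Var) :
    ∃ y, Form.int I (Form.eq Y y) ∈ Δ := by
  have := hΔ.thm_mem (ThmC.a2 I Y)
  obtain ⟨ψ, hmem, hψΔ⟩ := hΔ.bigOr_mem this
  obtain ⟨y, _, rfl⟩ := List.mem_map.1 hmem
  exact ⟨y, hψΔ⟩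

/-- The canonical value of `Y` under intervention `I`, read off from the
maximal consistent set. -/
noncomputable def tVal {Δ : Set (Form S)} (hΔ : MCS Δ) (I : Intervention S)
    (Y : S.Var) : S.Val Y :=
  Classical.choose (tVal_exists hΔ I Y)

lemma tVal_mem {Δ : Set (Form S)} (hΔ : MCS Δ) (I : Intervention S) (Y : S.Var) :
    Form.int I (Form.eq Y (tVal hΔ I Y)) ∈ Δ :=
  Classical.choose_spec (tVal_exists hΔ I Y)

lemma tVal_iff {Δ : Set (Form S)} (hΔ : MCS Δ) {I : Intervention S} {Y : S.Var}
    {y : S.Val Y} : Form.int I (Form.eq Y y) ∈ Δ ↔ tVal hΔ I Y = y := by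
  constructor
  · intro h
    by_contra hne
    have hn := hΔ.mp_mem (hΔ.thm_mem (ThmC.a1 I Y y (tVal hΔ I Y) (Ne.symm hne))) h
    exact (hΔ.neg_mem_iff.1 hn) (tVal_mem hΔ I Y)
  · rintro rfl
    exact tVal_mem hΔ I Y

lemma tVal_some {Δ : Set (Form S)} (hΔ : MCS Δ) {I : Intervention S} {Y : S.Var}
    {y : S.Val Y} (h : I Y = some y) : tVal hΔ I Y = y := by
  apply tVal_iff hΔ |>.1
  have hIeq : iUpd I Y y = I := by
    rw [iUpd, ← h]
    exact Function.update_eq_self _ _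
  have := hΔ.thm_mem (ThmC.a4 I Y y)
  rwa [hIeq] at this

lemma tVal_iUpd {Δ : Set (Form S)} (hΔ : MCS Δ) (I : Intervention S) (Y Z : S.Var) :
    tVal hΔ (iUpd I Y (tVal hΔ I Y)) Z = tVal hΔ I Z := by
  apply tVal_iff hΔ |>.1
  exact hΔ.mp_mem (hΔ.thm_mem (ThmC.a3 I Y Z (tVal hΔ I Y) (tVal hΔ I Z)))
    (hΔ.conj_mem_iff.2 ⟨tVal_mem hΔ I Y, tVal_mem hΔ I Z⟩)

/-- Extend an intervention with the canonical values of the variables in a list. -/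
noncomputable def extInt {Δ : Set (Form S)} (hΔ : MCS Δ) (I : Intervention S) :
    List S.Var → Intervention S
  | [] => I
  | Y :: l => iUpd (extInt hΔ I l) Y (tVal hΔ I Y)

lemma tVal_extInt {Δ : Set (Form S)} (hΔ : MCS Δ) (I : Intervention S)
    (l : List S.Var) : ∀ Z, tVal hΔ (extInt hΔ I l) Z = tVal hΔ I Z := by
  induction l with
  | nil => intro Z; rfl
  | cons Y l ih =>
      intro Z
      show tVal hΔ (iUpd (extInt hΔ I l) Y (tVal hΔ I Y)) Z = _
      rw [show tVal hΔ I Y = tVal hΔ (extInt hΔ I l) Y from (ih Y).symm,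
        tVal_iUpd hΔ]
      exact ih Z

lemma extInt_apply {Δ : Set (Form S)} (hΔ : MCS Δ) (I : Intervention S)
    (l : List S.Var) (W : S.Var) :
    extInt hΔ I l W = if W ∈ l then some (tVal hΔ I W) else I W := by
  induction l with
  | nil => simp [extInt]
  | cons Y l ih =>
      show iUpd (extInt hΔ I l) Y (tVal hΔ I Y) W = _
      by_cases hW : W = Y
      · subst hW
        rw [iUpd, Function.update_self]
        simp
      · rw [iUpd, Function.update_of_ne hW, ih]
        simp [hW]

/-- The intervention setting every variable other than `V` according to `g`. -/
def fullI (V : S.Var) (g : Others S V) : Intervention S := fun W =>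
  if h : W = V then none else some (g ⟨W, h⟩)

/-- The canonical structural functions. -/
noncomputable def canF {Δ : Set (Form S)} (hΔ : MCS Δ) : StructFuns S :=
  fun V g => tVal hΔ (fullI V g) V

/-- The canonical valuation. -/
noncomputable def canA {Δ : Set (Form S)} (hΔ : MCS Δ) : Env S :=
  fun Y => tVal hΔ (iEmpty S) Y

/-- The canonical valuation under intervention `I`. -/
noncomputable def tEnv {Δ : Set (Form S)} (hΔ : MCS Δ) (I : Intervention S) :
    Env S := fun Y => tVal hΔ I Y

lemma canF_eq {Δ : Set (Form S)} (hΔ : MCS Δ) {I : Intervention S} (V : S.Var)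
    (hIV : I V = none) : canF hΔ V ((tEnv hΔ I).restrict V) = tVal hΔ I V := by
  classical
  set l := (Finset.univ.filter (fun W : S.Var => W ≠ V)).toList with hl
  have hfull : fullI V ((tEnv hΔ I).restrict V) = extInt hΔ I l := by
    funext W
    rw [extInt_apply]
    by_cases hW : W = V
    · subst hW
      rw [fullI, dif_pos rfl, if_neg (by simp [hl]), hIV]
    · rw [fullI, dif_neg hW, if_pos (by simp [hl, hW])]
      rfl
  show tVal hΔ (fullI V ((tEnv hΔ I).restrict V)) V = _
  rw [hfull, tVal_extInt hΔ]

lemma tVal_exo {Δ : Set (Form S)} (hΔ : MCS Δ) {I : Intervention S} (U : S.Var)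
    (hexo : S.exo U) (hIU : I U = none) : tVal hΔ I U = canA hΔ U := by
  apply tVal_iff hΔ |>.1
  have h7 := hΔ.thm_iff_mem (ThmC.a7 I U (canA hΔ U) hexo hIU)
  exact h7.1 (tVal_mem hΔ (iEmpty S) U)

lemma tEnv_intervenedVal {Δ : Set (Form S)} (hΔ : MCS Δ) (I : Intervention S) :
    IntervenedVal (canF hΔ) (canA hΔ) I (tEnv hΔ I) := by
  refine ⟨?_, ?_, ?_⟩
  · intro X _ v h
    exact tVal_some hΔ h
  · intro X hexo h
    exact tVal_exo hΔ X hexo h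
  · intro V hV
    cases hIV : I V with
    | some v =>
        show tVal hΔ I V = intF (canF hΔ) I V _
        simp only [intF, hIV, Option.getD_some]
        exact tVal_some hΔ hIV
    | none =>
        show tVal hΔ I V = intF (canF hΔ) I V ((tEnv hΔ I).restrict V)
        simp only [intF, hIV, Option.getD_none]
        exact (canF_eq hΔ V hIV).symm

lemma leadsTo_mem_of_dirAff {Δ : Set (Form S)} (hΔ : MCS Δ) {X V : S.Var}
    (h : DirAff (canF hΔ) X V) : leadsTo X V ∈ Δ := by
  obtain ⟨hV, hXV, g, x₁, x₂, hx, hne⟩ := h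
  set g' : ∀ W : {W : S.Var // W ≠ X ∧ W ≠ V}, S.Val W.val :=
    fun W => g ⟨W.val, W.prop.2⟩ with hg'
  have hfull : ∀ x : S.Val X,
      fullI V (Function.update g ⟨X, hXV⟩ x) = ltInt X V g' x := by
    intro x
    funext W
    by_cases hWX : W = X
    · subst hWX
      rw [ltInt_self, fullI, dif_neg hXV]
      exact congrArg some (Function.update_self _ _ _)
    · by_cases hWV : W = V
      · subst hWV
        rw [ltInt_V hXV, fullI, dif_pos rfl]
      · rw [ltInt_other hWX hWV, fullI, dif_neg hWV]
        refine congrArg some ?_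
        rw [Function.update_of_ne (fun hc => hWX (congrArg Subtype.val hc))]
  set v₁ := canF hΔ V (Function.update g ⟨X, hXV⟩ x₁) with hv₁
  set v₂ := canF hΔ V (Function.update g ⟨X, hXV⟩ x₂) with hv₂
  have hv₁' : v₁ = tVal hΔ (ltInt X V g' x₁) V := by
    rw [hv₁]
    show tVal hΔ (fullI V _) V = _
    rw [hfull x₁]
  have hv₂' : v₂ = tVal hΔ (ltInt X V g' x₂) V := by
    rw [hv₂]
    show tVal hΔ (fullI V _) V = _
    rw [hfull x₂]
  have m₁ : Form.int (ltInt X V g' x₁) (Form.eq V v₁) ∈ Δ := by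
    rw [hv₁']
    exact tVal_mem hΔ _ V
  have m₂ : Form.int (ltInt X V g' x₂) (Form.eq V v₂) ∈ Δ := by
    rw [hv₂']
    exact tVal_mem hΔ _ V
  apply hΔ.mem_bigOr_of_mem (l := _) (ψ := Form.conj
    (Form.int (ltInt X V g' x₁) (Form.eq V v₁))
    (Form.int (ltInt X V g' x₂) (Form.eq V v₂)))
  · apply List.mem_map.2
    refine ⟨⟨g', ⟨x₁, x₂⟩, ⟨v₁, v₂⟩⟩, ?_, rfl⟩
    rw [Finset.mem_toList, Finset.mem_filter]
    exact ⟨Finset.mem_univ _, hx, hne⟩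
  · exact hΔ.conj_mem_iff.2 ⟨m₁, m₂⟩

lemma transGen_path {α : Type*} {r : α → α → Prop} {a b : α}
    (h : Relation.TransGen r a b) :
    ∃ (N : ℕ) (X : ℕ → α), 0 < N ∧ X 0 = a ∧ X N = b ∧
      ∀ i < N, r (X i) (X (i + 1)) := by
  induction h with
  | @single c hc =>
      refine ⟨1, fun i => if i = 0 then a else c, one_pos, by simp, by simp, ?_⟩
      intro i hi
      interval_cases i
      simpa using hc
  | @tail b c hab hbc ih =>
      obtain ⟨N, X, hN, h0, hNb, hstep⟩ := ih
      refine ⟨N + 1, fun i => if i ≤ N then X i else c, by omega,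
        by simp [h0], by simp, ?_⟩
      intro i hi
      by_cases hiN : i < N
      · simp only [if_pos (by omega : i ≤ N), if_pos (by omega : i + 1 ≤ N)]
        exact hstep i hiN
      · have hieq : i = N := by omega
        subst hieq
        simp only [if_pos le_rfl, if_neg (by omega : ¬ i + 1 ≤ i)]
        rw [hNb]
        exact hbc

lemma canF_recursive {Δ : Set (Form S)} (hΔ : MCS Δ) : RecursiveF (canF hΔ) := by
  intro a b hab hba
  have hcyc : Relation.TransGen (DirAff (canF hΔ)) a a := hab.trans hba
  obtain ⟨N, X, hN, h0, hNa, hstep⟩ := transGen_path hcyc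
  rcases Nat.lt_or_ge N 2 with hN2 | hN2
  · have hone : N = 1 := by omega
    subst hone
    obtain ⟨-, hne, -⟩ := hstep 0 one_pos
    exact hne (h0.trans hNa.symm)
  · set k := N - 2 with hk
    set Y : ℕ → S.Var := fun i => X (min i (N - 1)) with hY
    have hedges : ∀ i ≤ k, DirAff (canF hΔ) (Y i) (Y (i + 1)) := by
      intro i hi
      have h1 : min i (N - 1) = i := by omega
      have h2 : min (i + 1) (N - 1) = i + 1 := by omega
      simp only [hY, h1, h2]
      exact hstep i (by omega)
    have hclose : DirAff (canF hΔ) (Y (k + 1)) (Y 0) := by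
      have h1 : min (k + 1) (N - 1) = N - 1 := by omega
      have h2 : min 0 (N - 1) = 0 := by omega
      simp only [hY, h1, h2, h0]
      have := hstep (N - 1) (by omega)
      rwa [show N - 1 + 1 = N by omega, hNa] at this
    have hchainmem : ∀ n ≤ k, chainConj Y n ∈ Δ := by
      intro n
      induction n with
      | zero =>
          intro _
          exact leadsTo_mem_of_dirAff hΔ (hedges 0 (Nat.zero_le _))
      | succ n ih =>
          intro hn
          show Form.conj _ _ ∈ Δ
          exact hΔ.conj_mem_iff.2
            ⟨ih (by omega), leadsTo_mem_of_dirAff hΔ (hedges (n + 1) hn)⟩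
    have hclosemem : leadsTo (Y (k + 1)) (Y 0) ∈ Δ := leadsTo_mem_of_dirAff hΔ hclose
    have hadj : ∀ i ≤ k, Y i ≠ Y (i + 1) := by
      intro i hi
      obtain ⟨-, hne, -⟩ := hedges i hi
      exact hne
    have hlastne : Y (k + 1) ≠ Y 0 := by
      obtain ⟨-, hne, -⟩ := hclose
      exact hne
    have hthm := ThmC.a6 Y k hadj hlastne
    have hnegmem : Form.neg (leadsTo (Y (k + 1)) (Y 0)) ∈ Δ :=
      hΔ.mp_mem (hΔ.thm_mem hthm) (hchainmem k le_rfl)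
    exact (hΔ.neg_mem_iff.1 hnegmem) hclosemem

lemma canA_complies {Δ : Set (Form S)} (hΔ : MCS Δ) :
    Complies (canF hΔ) (canA hΔ) := by
  intro V hV
  exact (tEnv_intervenedVal hΔ (iEmpty S)).2.2 V hV

lemma truth_lemma {Δ : Set (Form S)} (hΔ : MCS Δ) (φ : Form S) :
    ∀ I : Intervention S,
      SatC φ (intF (canF hΔ) I) (intVal (canF hΔ) (canA hΔ) I) ↔
        Form.int I φ ∈ Δ := by
  have hrec := canF_recursive hΔ
  induction φ with
  | eq Y y =>
      intro I
      rw [show SatC (Form.eq Y y) (intF (canF hΔ) I) (intVal (canF hΔ) (canA hΔ) I) ↔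
        intVal (canF hΔ) (canA hΔ) I Y = y from Iff.rfl]
      rw [intVal_eq hrec (tEnv_intervenedVal hΔ I)]
      exact (tVal_iff hΔ).symm
  | neg φ ih =>
      intro I
      rw [satC_neg, ih I, ← hΔ.neg_mem_iff]
      exact (hΔ.thm_iff_mem (ThmC.aNeg I φ)).symm
  | conj φ ψ ihφ ihψ =>
      intro I
      rw [satC_conj, ihφ I, ihψ I, ← hΔ.conj_mem_iff]
      exact (hΔ.thm_iff_mem (ThmC.aConj I φ ψ)).symm
  | int J φ ih =>
      intro I
      rw [satC_int, intF_icomp, intVal_icomp hrec, ih (icomp I J)]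
      exact (hΔ.thm_iff_mem (ThmC.aIntInt I J φ)).symm

lemma satC_canonical {Δ : Set (Form S)} (hΔ : MCS Δ) (φ : Form S) :
    SatC φ (canF hΔ) (canA hΔ) ↔ φ ∈ Δ := by
  have h := truth_lemma hΔ φ (iEmpty S)
  rw [intF_empty, intVal_empty (canF_recursive hΔ) (canA_complies hΔ)] at h
  rw [h]
  exact (hΔ.thm_iff_mem (thm_int_empty φ)).symm

end Aux

/-- Theorem: the proof system L_C is sound and strongly complete for the language
L_C with respect to recursive causal models. -/
theorem LC_sound_and_strongly_complete (S : Sig) (Γ : Set (Form S)) (φ : Form S) :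
    ProvC Γ φ ↔
      (∀ (F : StructFuns S) (A : Env S), RecursiveF F → Complies F A →
        (∀ ψ ∈ Γ, SatC ψ F A) → SatC φ F A) := by
  constructor
  · intro h F A hF hA hΓ
    exact soundness h F A hF hA hΓ
  · intro hsem
    by_contra hnp
    have hcon := con_insert_neg hnp
    obtain ⟨Δ, hsub, hΔ⟩ := lindenbaum hcon
    have hsatΓ : ∀ ψ ∈ Γ, SatC ψ (canF hΔ) (canA hΔ) := fun ψ hψ =>
      (satC_canonical hΔ ψ).2 (hsub (Set.mem_insert_of_mem _ hψ))
    have hφ := hsem (canF hΔ) (canA hΔ) (canF_recursive hΔ) (canA_complies hΔ) hsatΓ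
    have hnegφ : Form.neg φ ∈ Δ := hsub (Set.mem_insert _ _)
    exact ((satC_canonical hΔ (Form.neg φ)).2 hnegφ) hφ
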